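/- Let k ≥ 0 and let a : Fin (2k+2) → ℝ/ℤ be injective (2k+2 distinct points on the circle). Then Σ_{i=0}^{2k+1} (−1)^i · sgn(a ∘ δ_i) = 0, where δ_i : Fin (2k+1) → Fin (2k+2) is the i-th face map (the order-preserving injection omitting i), and sgn is the cyclic sign of an injective (2k+1)-tuple. -/

import Mathlib

noncomputable section
open Classical

instance : Fact ((0:ℝ) < 1) := ⟨one_pos⟩

/-- The circle `ℝ/ℤ`. -/
abbrev S1 := AddCircle (1 : ℝ)

lemma sbtw_coe_real {x y z : ℝ} (h0 : 0 ≤ x) (hxy : x < y) (hyz : y < z) (hz : z < 1) :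
    sbtw (x : S1) (y : S1) (z : S1) := by
  have h1 : (0:ℝ) < 1 := one_pos
  rw [sbtw_iff_btw_not_btw]
  constructor
  · show Btw.btw (x : ℝ ⧸ AddSubgroup.zmultiples (1:ℝ)) y z
    rw [QuotientAddGroup.btw_coe_iff]
    have e1 : toIcoMod h1 x y = y := (toIcoMod_eq_self h1).mpr ⟨hxy.le, by linarith⟩
    have e2 : toIocMod h1 x z = z := (toIocMod_eq_self h1).mpr ⟨by linarith, by linarith⟩
    rw [e1, e2]; linarith
  · show ¬ Btw.btw (z : ℝ ⧸ AddSubgroup.zmultiples (1:ℝ)) y x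
    rw [QuotientAddGroup.btw_coe_iff]
    have e1 : toIcoMod h1 z y = y + 1 := by
      rw [toIcoMod_eq_iff h1]
      exact ⟨⟨by linarith, by linarith⟩, ⟨-1, by simp⟩⟩
    have e2 : toIocMod h1 z x = x + 1 := by
      rw [toIocMod_eq_iff h1]
      exact ⟨⟨by linarith, by linarith⟩, ⟨-1, by simp⟩⟩
    rw [e1, e2]; push_neg; linarith

/-- A tuple of points on the circle is in cyclic order if every increasing triple of
indices gives points in strict circular betweenness. -/
def InCyclicOrder {m : ℕ} (b : Fin m → S1) : Prop :=
  ∀ i j l : Fin m, i < j → j < l → sbtw (b i) (b j) (b l)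

lemma exists_cyclic {m : ℕ} (b : Fin m → S1) (hb : Function.Injective b) :
    ∃ σ : Equiv.Perm (Fin m), InCyclicOrder (b ∘ σ) := by
  classical
  set r : Fin m → ℝ := fun i => ((AddCircle.equivIco 1 0 (b i) : ℝ)) with hr_def
  have hmem : ∀ i, r i ∈ Set.Ico (0:ℝ) (0 + 1) := fun i => (AddCircle.equivIco 1 0 (b i)).2
  have hcoe : ∀ i, (r i : S1) = b i := by
    intro i
    have : (AddCircle.equivIco 1 0).symm (AddCircle.equivIco 1 0 (b i)) = b i :=
      (AddCircle.equivIco 1 0).symm_apply_apply (b i)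
    exact this
  have hrinj : Function.Injective r := by
    intro i j h
    apply hb
    rw [← hcoe i, ← hcoe j, h]
  refine ⟨Tuple.sort r, ?_⟩
  have hmono : StrictMono (r ∘ Tuple.sort r) :=
    (Tuple.monotone_sort r).strictMono_of_injective (hrinj.comp (Equiv.injective _))
  intro i j l hij hjl
  have key : ∀ x : Fin m, b (Tuple.sort r x) = ((r (Tuple.sort r x)) : S1) :=
    fun x => (hcoe _).symm
  simp only [Function.comp_apply, key]
  apply sbtw_coe_real (hmem _).1 (hmono hij) (hmono hjl)
  simpa using (hmem (Tuple.sort r l)).2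

def sbtwIdx {m : ℕ} (x y z : Fin m) : Prop :=
  (x < y ∧ y < z) ∨ (y < z ∧ z < x) ∨ (z < x ∧ x < y)

lemma sbtw_of_sbtwIdx {m : ℕ} {c : Fin m → S1} (hc : InCyclicOrder c) {x y z : Fin m}
    (h : sbtwIdx x y z) : sbtw (c x) (c y) (c z) := by
  rcases h with ⟨h1, h2⟩ | ⟨h1, h2⟩ | ⟨h1, h2⟩
  · exact hc x y z h1 h2
  · exact sbtw_cyclic_right (hc y z x h1 h2)
  · exact sbtw_cyclic_left (hc z x y h1 h2)

lemma sbtwIdx_total {m : ℕ} {x y z : Fin m} (hxy : x ≠ y) (hyz : y ≠ z) (hzx : z ≠ x) :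
    sbtwIdx x y z ∨ sbtwIdx x z y := by
  simp only [sbtwIdx, Fin.lt_def, Ne, Fin.ext_iff] at *
  omega

lemma sbtwIdx_of_sbtw {m : ℕ} {c : Fin m → S1} (hc : InCyclicOrder c) {x y z : Fin m}
    (h : sbtw (c x) (c y) (c z)) : sbtwIdx x y z := by
  have hxy : x ≠ y := by rintro rfl; exact sbtw_irrefl_left h
  have hyz : y ≠ z := by rintro rfl; exact sbtw_irrefl_right h
  have hzx : z ≠ x := by rintro rfl; exact sbtw_irrefl_left_right h
  rcases sbtwIdx_total hxy hyz hzx with h' | h'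
  · exact h'
  · exact absurd (sbtw_cyclic_left (sbtw_of_sbtwIdx hc h')) (sbtw_asymm h)

lemma sbtwIdx_add {m : ℕ} {x y z : Fin m} (t : Fin m) (h : sbtwIdx x y z) :
    sbtwIdx (x + t) (y + t) (z + t) := by
  have key : ∀ u : Fin m, (u + t).val = u.val + t.val ∨ (u + t).val + m = u.val + t.val := by
    intro u
    rcases Nat.lt_or_ge (u.val + t.val) m with hlt | hge
    · left; rw [Fin.val_add, Nat.mod_eq_of_lt hlt]
    · right
      rw [Fin.val_add, Nat.mod_eq_sub_mod hge, Nat.mod_eq_of_lt (by omega)]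
      omega
  have hx := key x; have hy := key y; have hz := key z
  have bx' := (x+t).isLt; have by' := (y+t).isLt; have bz' := (z+t).isLt
  simp only [sbtwIdx, Fin.lt_def] at h ⊢
  revert hx hy hz bx' by' bz'
  generalize (x+t).val = X
  generalize (y+t).val = Y
  generalize (z+t).val = Z
  intros
  omega

open Equiv Equiv.Perm in
lemma perm_eq_addRight {n : ℕ} (σ : Equiv.Perm (Fin (n+1)))
    (h : ∀ x y z : Fin (n+1), x < y → y < z → sbtwIdx (σ x) (σ y) (σ z)) :
    σ = Equiv.addRight (σ 0) := by
  set t : Fin (n+1) := σ 0 with ht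
  set τ : Equiv.Perm (Fin (n+1)) := σ.trans (Equiv.addRight (-t)) with hτ
  have hτ_apply : ∀ x, τ x = σ x + (-t) := fun x => rfl
  have hτ0 : τ 0 = 0 := by simp [hτ_apply, ht]
  have hτidx : ∀ x y z : Fin (n+1), x < y → y < z → sbtwIdx (τ x) (τ y) (τ z) := by
    intro x y z hxy hyz
    simpa only [hτ_apply] using sbtwIdx_add (-t) (h x y z hxy hyz)
  have hmono : StrictMono τ := by
    intro x y hxy
    rcases eq_or_ne x 0 with rfl | hx0
    · rw [hτ0]
      apply Fin.pos_of_ne_zero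
      intro hy
      have hy0 : y = 0 := τ.injective (by rw [hy, hτ0])
      exact absurd hxy (by simp [hy0])
    · have h0x : (0 : Fin (n+1)) < x := Fin.pos_of_ne_zero hx0
      have hidx := hτidx 0 x y h0x hxy
      rw [hτ0] at hidx
      rcases hidx with ⟨h1, h2⟩ | ⟨h1, h2⟩ | ⟨h1, h2⟩
      · exact h2
      · exact h1
      · exact absurd h1 (Fin.not_lt_zero _)
  have hid : ⇑τ = id := by
    haveI : WellFoundedLT (Fin (n+1)) := inferInstance
    refine (hmono.range_inj strictMono_id).mp ?_
    rw [Set.range_id, Set.range_eq_univ]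
    exact τ.surjective
  apply Equiv.ext
  intro x
  show σ x = x + t
  have h1 : σ x + -t = x := congrFun hid x
  have h2 : σ x + -t + t = x + t := by rw [h1]
  simpa [add_assoc] using h2

open Fin.NatCast in
lemma addRight_eq_pow {n : ℕ} (s : ℕ) :
    (Equiv.addRight ((s : Fin (n+1))) : Equiv.Perm (Fin (n+1))) = (finRotate (n+1))^s := by
  induction s with
  | zero => ext x; simp
  | succ s ih =>
    apply Equiv.ext
    intro x
    calc (Equiv.addRight (((s+1 : ℕ) : Fin (n+1)))) x
        = x + ((s : Fin (n+1)) + 1) := by rw [Nat.cast_add, Nat.cast_one]; rfl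
      _ = (Equiv.addRight ((s : Fin (n+1)))) x + 1 := by rw [← add_assoc]; rfl
      _ = ((finRotate (n+1))^s) x + 1 := by rw [ih]
      _ = ((finRotate (n+1))^(s+1)) x := by
          rw [pow_succ']
          simp [Equiv.Perm.mul_apply, finRotate_succ_apply]

open Fin.NatCast in
lemma sign_addRight_even {n : ℕ} (hn : Even n) (t : Fin (n+1)) :
    Equiv.Perm.sign (Equiv.addRight t) = 1 := by
  have h : (Equiv.addRight t : Equiv.Perm (Fin (n+1))) = (finRotate (n+1))^(t.val) := by
    rw [← addRight_eq_pow]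
    congr 1
    exact (Fin.cast_val_eq_self t).symm
  rw [h, map_pow, sign_finRotate, Nat.add_sub_cancel, Even.neg_one_pow hn, one_pow]

/-- The cyclic sign of a tuple of points on the circle: the sign of any permutation
rearranging the tuple into cyclic order (well defined for injective tuples of odd
length). -/

noncomputable def cycSgn {m : ℕ} (a : Fin m → S1) : ℤ :=
  if h : ∃ σ : Equiv.Perm (Fin m), InCyclicOrder (a ∘ σ) then
    (Equiv.Perm.sign h.choose : ℤ)
  else 1

lemma cycSgn_eq {n : ℕ} (hn : Even n) (b : Fin (n+1) → S1) (hb : Function.Injective b)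
    (τ : Equiv.Perm (Fin (n+1))) (hτ : InCyclicOrder (b ∘ τ)) :
    cycSgn b = (Equiv.Perm.sign τ : ℤ) := by
  have hex : ∃ σ : Equiv.Perm (Fin (n+1)), InCyclicOrder (b ∘ σ) := ⟨τ, hτ⟩
  rw [cycSgn, dif_pos hex]
  set σ := hex.choose with hσdef
  have hσ : InCyclicOrder (b ∘ σ) := hex.choose_spec
  set c : Fin (n+1) → S1 := b ∘ τ with hc
  have hcinj : Function.Injective c := hb.comp τ.injective
  set ρ : Equiv.Perm (Fin (n+1)) := σ.trans τ.symm with hρ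
  have hcomp : ∀ x, c (ρ x) = b (σ x) := by intro x; simp [hc, hρ]
  have hidx : ∀ x y z : Fin (n+1), x < y → y < z → sbtwIdx (ρ x) (ρ y) (ρ z) := by
    intro x y z hxy hyz
    apply sbtwIdx_of_sbtw hτ
    rw [hcomp, hcomp, hcomp]
    exact hσ x y z hxy hyz
  have hrot : ρ = Equiv.addRight (ρ 0) := perm_eq_addRight ρ hidx
  have hsignρ : Equiv.Perm.sign ρ = 1 := by rw [hrot]; exact sign_addRight_even hn _
  have hστ : σ = τ * ρ := by
    apply Equiv.ext
    intro x
    simp [hρ, Equiv.Perm.mul_apply]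
  rw [hστ, map_mul, hsignρ, mul_one]

open Equiv Equiv.Perm in
lemma face_decomp {n : ℕ} (π : Equiv.Perm (Fin (n+1))) (i : Fin (n+1)) :
    ∃ e : Equiv.Perm (Fin n), (∀ x, π (i.succAbove x) = (π i).succAbove (e x)) ∧
      (Equiv.Perm.sign e : ℤ) =
        (-1:ℤ)^(i : ℕ) * (-1:ℤ)^((π i : ℕ)) * (Equiv.Perm.sign π : ℤ) := by
  set ρ : Perm (Fin (n+1)) := (π i).cycleRange * (π * (i.cycleRange)⁻¹) with hρ
  have hρ_apply : ∀ x, ρ x = (π i).cycleRange (π ((i.cycleRange)⁻¹ x)) := fun x => rfl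
  have hρ0 : ρ 0 = 0 := by
    have h1 : (i.cycleRange)⁻¹ 0 = i := by
      rw [Perm.inv_eq_iff_eq]
      exact (Fin.cycleRange_self i).symm
    rw [hρ_apply, h1, Fin.cycleRange_self]
  have hρ_eq : ρ = Equiv.Perm.decomposeFin.symm (Equiv.Perm.decomposeFin ρ) :=
    (Equiv.symm_apply_apply _ _).symm
  set p := (Equiv.Perm.decomposeFin ρ).1 with hp
  set e := (Equiv.Perm.decomposeFin ρ).2 with he
  have hpe : Equiv.Perm.decomposeFin ρ = (p, e) := rfl
  rw [hpe] at hρ_eq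
  have hp0 : p = 0 := by
    have := Equiv.Perm.decomposeFin_symm_apply_zero p e
    rw [← hρ_eq] at this
    rw [← this, hρ0]
  rw [hp0] at hρ_eq
  have hρsucc : ∀ x : Fin n, ρ x.succ = (e x).succ := by
    intro x
    rw [hρ_eq, Equiv.Perm.decomposeFin_symm_apply_succ, Equiv.swap_self]
    rfl
  have hsuccAbove : ∀ (j : Fin (n+1)) (x : Fin n), j.succAbove x = (j.cycleRange)⁻¹ x.succ := by
    intro j x
    rw [eq_comm, Perm.inv_eq_iff_eq]
    exact (Fin.cycleRange_succAbove j x).symm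
  refine ⟨e, ?_, ?_⟩
  · intro x
    calc π (i.succAbove x) = π ((i.cycleRange)⁻¹ x.succ) := by rw [hsuccAbove]
      _ = ((π i).cycleRange)⁻¹ (ρ x.succ) := by rw [hρ_apply]; simp
      _ = ((π i).cycleRange)⁻¹ ((e x).succ) := by rw [hρsucc]
      _ = (π i).succAbove (e x) := (hsuccAbove _ _).symm
  · have hse : Equiv.Perm.sign e = Equiv.Perm.sign ρ := by
      rw [hρ_eq, Equiv.Perm.decomposeFin.symm_sign, if_pos rfl, one_mul]
    have hsρ : Equiv.Perm.sign ρ = (-1)^((π i : ℕ)) * ((-1)^(i:ℕ) * Equiv.Perm.sign π) := by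
      rw [hρ, map_mul, map_mul, map_inv, Fin.sign_cycleRange, Fin.sign_cycleRange]
      have hinv : ((-1 : ℤˣ)^(i:ℕ))⁻¹ = (-1:ℤˣ)^(i:ℕ) := by
        rw [← inv_pow]
        norm_num
      rw [hinv, mul_comm (Equiv.Perm.sign π)]
    rw [hse, hsρ]
    push_cast
    ring

/-- The alternating sum of cyclic signs over the faces of an injective `(2k+2)`-tuple
vanishes. Here `i.succAbove : Fin (2k+1) → Fin (2k+2)` is the `i`-th coface map. -/
theorem stmt3 (k : ℕ) (a : Fin (2 * k + 2) → S1) (ha : Function.Injective a) :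
    ∑ i : Fin (2 * k + 2), (-1 : ℤ) ^ (i : ℕ) * cycSgn (a ∘ i.succAbove) = 0 := by
  obtain ⟨π0, hπ0⟩ := exists_cyclic a ha
  set c : Fin (2*k+2) → S1 := a ∘ π0 with hc
  set ρ : Equiv.Perm (Fin (2*k+2)) := π0⁻¹ with hρ
  set s : ℤ := (Equiv.Perm.sign ρ : ℤ) with hs
  have key : ∀ i : Fin (2*k+2),
      cycSgn (a ∘ i.succAbove) = (-1:ℤ)^(i:ℕ) * (-1:ℤ)^((ρ i : ℕ)) * s := by
    intro i
    obtain ⟨e, he, hsign⟩ := face_decomp ρ i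
    have hb : InCyclicOrder ((a ∘ i.succAbove) ∘ ⇑e⁻¹) := by
      have hco : InCyclicOrder (c ∘ (ρ i).succAbove) := by
        intro x y z hxy hyz
        exact hπ0 _ _ _ (Fin.strictMono_succAbove (ρ i) hxy)
          (Fin.strictMono_succAbove (ρ i) hyz)
      have heq : (a ∘ i.succAbove) ∘ ⇑e⁻¹ = c ∘ (ρ i).succAbove := by
        funext x
        have h2 := he (e⁻¹ x)
        rw [show e (e⁻¹ x) = x from e.apply_symm_apply x] at h2
        have h3 := congrArg (fun z => a (π0 z)) h2
        simp only [hρ, Equiv.Perm.coe_inv, Equiv.apply_symm_apply] at h3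
        simpa [hc, hρ] using h3
      rw [heq]
      exact hco
    have hcyc := cycSgn_eq (n := 2*k) ⟨k, two_mul k⟩ (a ∘ i.succAbove)
      (ha.comp (Fin.succAbove_right_injective)) e⁻¹ hb
    rw [hcyc, Equiv.Perm.sign_inv, hsign]
  have hterm : ∀ i : Fin (2*k+2),
      (-1:ℤ)^(i:ℕ) * ((-1:ℤ)^(i:ℕ) * (-1:ℤ)^((ρ i : ℕ)) * s) = (-1:ℤ)^((ρ i : ℕ)) * s := by
    intro i
    have h1 : (-1:ℤ)^(i:ℕ) * (-1:ℤ)^(i:ℕ) = 1 := by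
      rw [← pow_add]
      exact Even.neg_one_pow ⟨(i:ℕ), rfl⟩
    calc (-1:ℤ)^(i:ℕ) * ((-1:ℤ)^(i:ℕ) * (-1:ℤ)^((ρ i : ℕ)) * s)
        = ((-1:ℤ)^(i:ℕ) * (-1:ℤ)^(i:ℕ)) * ((-1:ℤ)^((ρ i : ℕ)) * s) := by ring
      _ = (-1:ℤ)^((ρ i : ℕ)) * s := by rw [h1, one_mul]
  rw [Finset.sum_congr rfl (fun i _ => by rw [key i, hterm i])]
  rw [← Finset.sum_mul]
  have hre : ∑ i : Fin (2*k+2), (-1:ℤ)^((ρ i : ℕ)) = ∑ i : Fin (2*k+2), (-1:ℤ)^((i:ℕ)) :=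
    Equiv.sum_comp ρ (fun j => (-1:ℤ)^((j:ℕ)))
  rw [hre]
  have hzero : ∑ i : Fin (2*k+2), (-1:ℤ)^((i:ℕ)) = 0 := by
    rw [Fin.sum_univ_eq_sum_range (fun j => (-1:ℤ)^j)]
    rw [neg_one_geom_sum]
    rw [if_pos ⟨k+1, by ring⟩]
  rw [hzero, zero_mul]
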